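/- Let $n = n_x + n_u$, let $P \in \mathbb{R}^{n \times n}$ be symmetric, $J = [\, I_{n_x} \;\; 0_{n_x \times n_u}\,] \in \mathbb{R}^{n_x \times n}$, $A_{\rm cl} \in \mathbb{R}^{n \times n}$, $M_1 \in \mathbb{R}^{n \times m_1}$, $M_2 \in \mathbb{R}^{n \times m_2}$, and let $\alpha, \zeta, \psi_1, \psi_2 > 0$, $k_b, \vartheta, \beta \ge 0$. Suppose $\mathrm{Sym}(P A_{\rm cl}) + \zeta^{-1} P J^\top J P \preceq -\alpha I_n$, $\|P M_1\| \le \vartheta$ and $\|P M_2\| \le \beta$ (operator norms). Then for all $z \in \mathbb{R}^n$, $e \in \mathbb{R}^{m_1}$, $\bar z \in \mathbb{R}^{m_2}$, and $b \in \mathbb{R}^{n_x}$ with $\|b\| \le k_b$: $2\, z^\top P \big( A_{\rm cl} z + M_1 e + M_2 \bar z + J^\top b \big) \;\le\; -\big(\alpha - \psi_1 \vartheta^2 - \psi_2 \beta^2\big)\|z\|^2 + \zeta k_b^2 + \psi_1^{-1}\|e\|^2 + \psi_2^{-1}\|\bar z\|^2$. -/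

import Mathlib

open Matrix

/-- The operator (spectral) norm of a real matrix, i.e. the operator norm of the induced
linear map between the corresponding Euclidean spaces. -/
noncomputable def opNorm {m n : Type*} [Fintype m] [Fintype n] [DecidableEq n]
    (M : Matrix m n ℝ) : ℝ :=
  ‖LinearMap.toContinuousLinearMap (Matrix.toEuclideanLin M)‖

lemma inner_eq_dot {p : Type*} [Fintype p] (y v : EuclideanSpace ℝ p) :
    (inner ℝ y v : ℝ) = (y : p → ℝ) ⬝ᵥ (v : p → ℝ) := by
  simp [PiLp.inner_apply, dotProduct, RCLike.inner_apply, mul_comm]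

lemma dot_mulVec_le {p q : Type*} [Fintype p] [Fintype q] [DecidableEq q]
    (M : Matrix p q ℝ) (c : ℝ) (hc : opNorm M ≤ c)
    (y : EuclideanSpace ℝ p) (x : EuclideanSpace ℝ q) :
    (y : p → ℝ) ⬝ᵥ M *ᵥ (x : q → ℝ) ≤ c * (‖y‖ * ‖x‖) := by
  have h1 : (y : p → ℝ) ⬝ᵥ M *ᵥ (x : q → ℝ) = (inner ℝ y (Matrix.toEuclideanLin M x) : ℝ) := by
    rw [inner_eq_dot]; rfl
  have h2 : (inner ℝ y (Matrix.toEuclideanLin M x) : ℝ) ≤ ‖y‖ * ‖Matrix.toEuclideanLin M x‖ :=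
    real_inner_le_norm _ _
  have h3 : ‖Matrix.toEuclideanLin M x‖ ≤ opNorm M * ‖x‖ := by
    simpa [opNorm] using (LinearMap.toContinuousLinearMap (Matrix.toEuclideanLin M)).le_opNorm x
  have hy : (0:ℝ) ≤ ‖y‖ := norm_nonneg _
  have hx : (0:ℝ) ≤ ‖x‖ := norm_nonneg _
  have hop : (0:ℝ) ≤ opNorm M := norm_nonneg _
  nlinarith [mul_le_mul_of_nonneg_left h3 hy, mul_le_mul_of_nonneg_right hc (mul_nonneg hy hx)]

lemma dot_transpose {p q : Type*} [Fintype p] [Fintype q] (A : Matrix p q ℝ)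
    (x : p → ℝ) (y : q → ℝ) : x ⬝ᵥ A *ᵥ y = (Aᵀ *ᵥ x) ⬝ᵥ y := by
  rw [Matrix.dotProduct_mulVec, Matrix.mulVec_transpose]

lemma young (ψ x y : ℝ) (hψ : 0 < ψ) : 2*(x*y) ≤ ψ*x^2 + ψ⁻¹*y^2 := by
  have key : ψ⁻¹ * (ψ*x - y)^2 = ψ*x^2 - 2*(x*y) + ψ⁻¹*y^2 := by
    field_simp; ring
  have h0 : 0 ≤ ψ⁻¹ * (ψ*x - y)^2 := mul_nonneg (by positivity) (sq_nonneg _)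
  linarith [key ▸ h0]

/-- Pointwise Lyapunov-derivative estimate used in the event-triggered analysis:
if `Sym(P A_cl) + ζ⁻¹ P Jᵀ J P ⪯ -α I`, `‖P M₁‖ ≤ ϑ`, `‖P M₂‖ ≤ β`, `‖b‖ ≤ k_b`, then
`2 zᵀ P (A_cl z + M₁ e + M₂ z̄ + Jᵀ b)
  ≤ -(α - ψ₁ϑ² - ψ₂β²)‖z‖² + ζ k_b² + ψ₁⁻¹‖e‖² + ψ₂⁻¹‖z̄‖²`. -/
theorem lyapunov_derivative_estimate
    {nx nu m1 m2 : ℕ}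
    (P : Matrix (Fin nx ⊕ Fin nu) (Fin nx ⊕ Fin nu) ℝ) (hP : P.IsSymm)
    (J : Matrix (Fin nx) (Fin nx ⊕ Fin nu) ℝ)
    (hJ : J = Matrix.fromCols 1 0)
    (Acl : Matrix (Fin nx ⊕ Fin nu) (Fin nx ⊕ Fin nu) ℝ)
    (M1 : Matrix (Fin nx ⊕ Fin nu) (Fin m1) ℝ)
    (M2 : Matrix (Fin nx ⊕ Fin nu) (Fin m2) ℝ)
    (α ζ ψ1 ψ2 : ℝ) (hα : 0 < α) (hζ : 0 < ζ) (hψ1 : 0 < ψ1) (hψ2 : 0 < ψ2)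
    (kb ϑ β : ℝ) (hkb : 0 ≤ kb) (hϑ : 0 ≤ ϑ) (hβ : 0 ≤ β)
    (hLoewner : ((-α) • (1 : Matrix (Fin nx ⊕ Fin nu) (Fin nx ⊕ Fin nu) ℝ)
        - (P * Acl + (P * Acl)ᵀ + ζ⁻¹ • (P * Jᵀ * J * P))).PosSemidef)
    (hM1 : opNorm (P * M1) ≤ ϑ) (hM2 : opNorm (P * M2) ≤ β)
    (z : EuclideanSpace ℝ (Fin nx ⊕ Fin nu))
    (e : EuclideanSpace ℝ (Fin m1)) (zbar : EuclideanSpace ℝ (Fin m2))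
    (b : EuclideanSpace ℝ (Fin nx)) (hb : ‖b‖ ≤ kb) :
    2 * ((z : (Fin nx ⊕ Fin nu) → ℝ) ⬝ᵥ
        P.mulVec (Acl.mulVec z + M1.mulVec e + M2.mulVec zbar + Jᵀ.mulVec b))
      ≤ -(α - ψ1 * ϑ ^ 2 - ψ2 * β ^ 2) * ‖z‖ ^ 2 + ζ * kb ^ 2
        + ψ1⁻¹ * ‖e‖ ^ 2 + ψ2⁻¹ * ‖zbar‖ ^ 2 := by
  set u : Fin nx → ℝ := J *ᵥ (P *ᵥ (z : (Fin nx ⊕ Fin nu) → ℝ)) with hu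
  set ub : EuclideanSpace ℝ (Fin nx) := (WithLp.equiv 2 _).symm u with hubdef
  -- split LHS
  have hsplit : (z : (Fin nx ⊕ Fin nu) → ℝ) ⬝ᵥ
        P.mulVec (Acl.mulVec z + M1.mulVec e + M2.mulVec zbar + Jᵀ.mulVec b)
      = (z : (Fin nx ⊕ Fin nu) → ℝ) ⬝ᵥ (P * Acl) *ᵥ z
        + (z : (Fin nx ⊕ Fin nu) → ℝ) ⬝ᵥ (P * M1) *ᵥ (e : Fin m1 → ℝ)
        + (z : (Fin nx ⊕ Fin nu) → ℝ) ⬝ᵥ (P * M2) *ᵥ (zbar : Fin m2 → ℝ)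
        + u ⬝ᵥ (b : Fin nx → ℝ) := by
    have hb' : (z : (Fin nx ⊕ Fin nu) → ℝ) ⬝ᵥ (P * Jᵀ) *ᵥ (b : Fin nx → ℝ)
        = u ⬝ᵥ (b : Fin nx → ℝ) := by
      rw [dot_transpose, Matrix.transpose_mul, Matrix.transpose_transpose, hP.eq,
        ← Matrix.mulVec_mulVec, hu]
    simp only [Matrix.mulVec_add, dotProduct_add, Matrix.mulVec_mulVec]
    rw [hb']
  -- quadratic form from Loewner
  have hq := hLoewner.dotProduct_mulVec_nonneg (z : (Fin nx ⊕ Fin nu) → ℝ)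
  rw [star_trivial] at hq
  simp only [Matrix.sub_mulVec, Matrix.add_mulVec, Matrix.smul_mulVec,
    Matrix.one_mulVec, dotProduct_sub, dotProduct_add, dotProduct_smul,
    smul_eq_mul] at hq
  have htr : (z : (Fin nx ⊕ Fin nu) → ℝ) ⬝ᵥ (P * Acl)ᵀ *ᵥ z
      = (z : (Fin nx ⊕ Fin nu) → ℝ) ⬝ᵥ (P * Acl) *ᵥ z := by
    rw [dot_transpose, Matrix.transpose_transpose, dotProduct_comm]
  have hJP : (z : (Fin nx ⊕ Fin nu) → ℝ) ⬝ᵥ (P * Jᵀ * J * P) *ᵥ z = u ⬝ᵥ u := by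
    have h1 : P * Jᵀ * J * P = (J * P)ᵀ * (J * P) := by
      simp [Matrix.transpose_mul, hP.eq, Matrix.mul_assoc]
    rw [h1, ← Matrix.mulVec_mulVec, dot_transpose, Matrix.transpose_transpose, hu,
      Matrix.mulVec_mulVec]
  rw [htr, hJP] at hq
  -- norms
  have hz2 : (z : (Fin nx ⊕ Fin nu) → ℝ) ⬝ᵥ (z : (Fin nx ⊕ Fin nu) → ℝ) = ‖z‖ ^ 2 := by
    rw [← real_inner_self_eq_norm_sq z, inner_eq_dot]
  have hub2 : u ⬝ᵥ u = ‖ub‖ ^ 2 := by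
    rw [← real_inner_self_eq_norm_sq ub, inner_eq_dot]; rfl
  -- cross-term bounds
  have hm1 : (z : (Fin nx ⊕ Fin nu) → ℝ) ⬝ᵥ (P * M1) *ᵥ (e : Fin m1 → ℝ)
      ≤ ϑ * (‖z‖ * ‖e‖) := dot_mulVec_le _ _ hM1 z e
  have hm2 : (z : (Fin nx ⊕ Fin nu) → ℝ) ⬝ᵥ (P * M2) *ᵥ (zbar : Fin m2 → ℝ)
      ≤ β * (‖z‖ * ‖zbar‖) := dot_mulVec_le _ _ hM2 z zbar
  have hbd : u ⬝ᵥ (b : Fin nx → ℝ) ≤ ‖ub‖ * kb := by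
    have h1 : u ⬝ᵥ (b : Fin nx → ℝ) ≤ ‖ub‖ * ‖b‖ := by
      have h2 := real_inner_le_norm ub b
      rw [inner_eq_dot] at h2
      exact h2
    exact h1.trans (mul_le_mul_of_nonneg_left hb (norm_nonneg _))
  -- Young inequalities
  have y1 := young ψ1 (ϑ * ‖z‖) ‖e‖ hψ1
  have y2 := young ψ2 (β * ‖z‖) ‖zbar‖ hψ2
  have y3 := young ζ⁻¹ ‖ub‖ kb (inv_pos.mpr hζ)
  rw [inv_inv] at y3
  rw [hsplit]
  rw [hz2, hub2] at hq
  linarith [hq, hm1, hm2, hbd, hz2, hub2, y1, y2, y3]
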